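/- Let λ = (1+√5)/2, λ̄ = −1/λ. For n ≥ 4 and any exponents α₁,…,α_{n−4} ∈ {0,1}, the quantity λ̄ⁿ − λ̄⁰ − Σ_{i=1}^{n−4} αᵢ λ̄ⁱ lies strictly between −λ and 0. -/

import Mathlib

noncomputable def lam : ℝ := (1 + Real.sqrt 5) / 2
noncomputable def lamBar : ℝ := -1 / lam

lemma sqrt5_sq : Real.sqrt 5 ^ 2 = 5 := Real.sq_sqrt (by norm_num)

lemma lamBar_eq : lamBar = (1 - Real.sqrt 5) / 2 := by
  have hs := sqrt5_sq
  have h0 : (0:ℝ) ≤ Real.sqrt 5 := Real.sqrt_nonneg 5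
  have h1 : (1 : ℝ) + Real.sqrt 5 ≠ 0 := by nlinarith
  unfold lamBar lam
  field_simp
  nlinarith

lemma lamBar_sq : lamBar ^ 2 = lamBar + 1 := by
  rw [lamBar_eq]; nlinarith [sqrt5_sq]

lemma lamBar_neg : lamBar < 0 := by
  rw [lamBar_eq]; nlinarith [sqrt5_sq, Real.sqrt_nonneg 5]

lemma lamBar_gt : -1 < lamBar := by
  rw [lamBar_eq]; nlinarith [sqrt5_sq, Real.sqrt_nonneg 5]

lemma lamBar_32 : 0 < 3 * lamBar + 2 := by
  rw [lamBar_eq]; nlinarith [sqrt5_sq, Real.sqrt_nonneg 5]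

lemma lam_eq : lam = 1 - lamBar := by
  rw [lamBar_eq]; unfold lam; ring

lemma sum_pow_lamBar (m : ℕ) :
    ∑ i ∈ Finset.Icc 1 m, lamBar ^ i = lamBar * lamBar ^ (m+1) - lamBar - 1 := by
  induction m with
  | zero => simp; linear_combination -lamBar_sq
  | succ m ih =>
      rw [Finset.sum_Icc_succ_top (by omega : 1 ≤ m + 1), ih]
      linear_combination (-(lamBar ^ (m+1))) * lamBar_sq

lemma sum_pow_negLamBar (m : ℕ) :
    ∑ i ∈ Finset.Icc 1 m, (-lamBar) ^ i
      = 1 - lamBar - 2 * (-lamBar) ^ (m+1) + lamBar * (-lamBar) ^ (m+1) := by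
  induction m with
  | zero => simp; linear_combination lamBar_sq
  | succ m ih =>
      rw [Finset.sum_Icc_succ_top (by omega : 1 ≤ m + 1), ih]
      linear_combination ((-lamBar) ^ (m+1)) * lamBar_sq

theorem superweight_bounds_abelian_ideal (n : ℕ) (hn : 4 ≤ n)
    (α : ℕ → ℝ) (hα : ∀ i, α i = 0 ∨ α i = 1) :
    -lam < lamBar ^ n - 1 - ∑ i ∈ Finset.Icc 1 (n - 4), α i * lamBar ^ i ∧
    lamBar ^ n - 1 - ∑ i ∈ Finset.Icc 1 (n - 4), α i * lamBar ^ i < 0 := by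
  set b := lamBar with hbdef
  have hb2 := lamBar_sq
  have hbneg := lamBar_neg
  have hbgt := lamBar_gt
  have h32 := lamBar_32
  set m := n - 4 with hm
  have hn4 : n = m + 4 := by omega
  -- per-term bounds
  have habs : ∀ i : ℕ, b ^ i ≤ (-b) ^ i ∧ -((-b) ^ i) ≤ b ^ i := by
    intro i
    have h1 : |b ^ i| = (-b) ^ i := by
      rw [abs_pow, abs_of_neg hbneg]
    constructor
    · calc b ^ i ≤ |b ^ i| := le_abs_self _
        _ = (-b) ^ i := h1
    · rw [← h1]; exact neg_abs_le _
  have hSup : ∑ i ∈ Finset.Icc 1 m, α i * b ^ i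
      ≤ ∑ i ∈ Finset.Icc 1 m, (b ^ i + (-b) ^ i) / 2 := by
    apply Finset.sum_le_sum
    intro i _
    rcases hα i with h | h <;> rw [h] <;> rcases habs i with ⟨h1, h2⟩ <;> nlinarith
  have hSlow : ∑ i ∈ Finset.Icc 1 m, (b ^ i - (-b) ^ i) / 2
      ≤ ∑ i ∈ Finset.Icc 1 m, α i * b ^ i := by
    apply Finset.sum_le_sum
    intro i _
    rcases hα i with h | h <;> rw [h] <;> rcases habs i with ⟨h1, h2⟩ <;> nlinarith
  have hG := sum_pow_lamBar m
  have hH := sum_pow_negLamBar m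
  have hsum1 : ∑ i ∈ Finset.Icc 1 m, (b ^ i + (-b) ^ i) / 2
      = ((b * b ^ (m+1) - b - 1) + (1 - b - 2 * (-b) ^ (m+1) + b * (-b) ^ (m+1))) / 2 := by
    rw [← hG, ← hH, ← Finset.sum_add_distrib]
    simp [Finset.sum_div, hbdef]
  have hsum2 : ∑ i ∈ Finset.Icc 1 m, (b ^ i - (-b) ^ i) / 2
      = ((b * b ^ (m+1) - b - 1) - (1 - b - 2 * (-b) ^ (m+1) + b * (-b) ^ (m+1))) / 2 := by
    rw [← hG, ← hH, ← Finset.sum_sub_distrib, Finset.sum_div]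
  rw [hsum1] at hSup
  rw [hsum2] at hSlow
  have hbn : b ^ n = b ^ 3 * b ^ (m+1) := by rw [hn4]; ring
  have hb3 : b ^ 3 = 2 * b + 1 := by linear_combination (b + 1) * hb2
  set u := b ^ (m+1) with hu
  set t := (-b) ^ (m+1) with ht
  have htpos : 0 < t := pow_pos (by linarith) _
  rcases habs (m+1) with ⟨hu1, hu2⟩
  have hprod1 : 0 ≤ (u + t) * (3 * b + 2) := mul_nonneg (by linarith) h32.le
  have hprod2 : 0 ≤ (t - u) * (3 * b + 2) := mul_nonneg (by linarith) h32.le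
  have hbt : 0 < (-b) * t := mul_pos (by linarith) htpos
  rw [lam_eq, ← hbdef, hbn]
  constructor
  · nlinarith [hSup, hprod1, hbt, hb3]
  · nlinarith [hSlow, hprod2, hbt, hb3]
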